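/- Let N be a rational map and suppose 1/(z - N(z)) = Σ_{i=1}^k m_i/(z - z_i) + s(z) where the z_i are distinct complex numbers, m_i ≥ 1 are integers, and s is a polynomial. Define p(z) = ∏_{i=1}^k (z - z_i)^{m_i} and q(z) = ∫_0^z s(w)dw. Then N(z) = z - p(z)/(p'(z) + p(z)q'(z)); in particular N is the Newton map of the entire function p·e^q. -/

import Mathlib

open Polynomial


lemma eval_derivative_prod_aux {k : ℕ} (z : Fin k → ℂ) (m : Fin k → ℕ)
    (hm : ∀ i, 1 ≤ m i) (w : ℂ) (hwz : ∀ i, w - z i ≠ 0) (t : Finset (Fin k)) :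
    (Polynomial.derivative (∏ i ∈ t, (X - C (z i)) ^ m i)).eval w
      = (∏ i ∈ t, (X - C (z i)) ^ m i).eval w * ∑ i ∈ t, (m i : ℂ) / (w - z i) := by
  induction t using Finset.induction_on with
  | empty =>
      simp only [Finset.prod_empty, derivative_one, eval_zero, Finset.sum_empty, mul_zero]
  | insert a t hnotmem ih =>
    rw [Finset.prod_insert hnotmem, Finset.sum_insert hnotmem, derivative_mul]
    simp only [eval_add, eval_mul, ih, derivative_pow, derivative_sub, derivative_X,
      derivative_C, sub_zero, mul_one, eval_natCast, eval_pow, eval_sub, eval_X, eval_C]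
    have hpow : (w - z a) ^ m a = (w - z a) ^ (m a - 1) * (w - z a) := by
      rw [← pow_succ, Nat.sub_add_cancel (hm a)]
    rw [hpow]
    have hza := hwz a
    field_simp

/-- If 1/(z - N z) has partial fraction decomposition ∑ mᵢ/(z - zᵢ) + s(z) with distinct
zᵢ and integers mᵢ ≥ 1, then setting p = ∏ (z - zᵢ)^{mᵢ} and q = ∫₀^z s, the map N is
given by N(z) = z - p/(p' + p q'), i.e. N is the Newton map of p·e^q. -/
theorem rational_map_with_partial_fractions_is_newton (N : ℂ → ℂ) (k : ℕ)
    (z : Fin k → ℂ) (hz : Function.Injective z) (m : Fin k → ℕ) (hm : ∀ i, 1 ≤ m i)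
    (s : Polynomial ℂ)
    (hpf : ∀ w : ℂ, (∀ i, w ≠ z i) → w ≠ N w →
      (w - N w)⁻¹ = (∑ i, (m i : ℂ) / (w - z i)) + s.eval w)
    (p q : Polynomial ℂ) (hp : p = ∏ i, (X - C (z i)) ^ m i)
    (hq : q.derivative = s) (hq0 : q.eval 0 = 0) :
    ∀ w : ℂ, (∀ i, w ≠ z i) → w ≠ N w →
      N w = w - p.eval w / ((p.derivative + p * q.derivative).eval w) := by
  intro w hw hN
  have hsub : w - N w ≠ 0 := sub_ne_zero.mpr hN
  have hwz : ∀ i, w - z i ≠ 0 := fun i => sub_ne_zero.mpr (hw i)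
  set S : ℂ := (∑ i, (m i : ℂ) / (w - z i)) + s.eval w with hS
  have hA : (w - N w)⁻¹ = S := hpf w hw hN
  have hSne : S ≠ 0 := hA ▸ inv_ne_zero hsub
  have hwn : w - N w = S⁻¹ := by
    rw [← hA, inv_inv]
  have hpw : p.eval w ≠ 0 := by
    rw [hp]
    simp only [eval_prod, eval_pow, eval_sub, eval_X, eval_C]
    exact Finset.prod_ne_zero_iff.mpr fun i _ => pow_ne_zero _ (hwz i)
  have hder : p.derivative.eval w = p.eval w * ∑ i, (m i : ℂ) / (w - z i) := by
    rw [hp]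
    exact eval_derivative_prod_aux z m hm w hwz Finset.univ
  have heval : (p.derivative + p * q.derivative).eval w = p.eval w * S := by
    rw [hq]
    simp only [eval_add, eval_mul, hder, hS]
    ring
  rw [heval]
  have : p.eval w / (p.eval w * S) = S⁻¹ := by
    field_simp
  rw [this, ← hwn]
  ring
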